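/- Suppose $0 < r < p < \infty$, $(\Omega,\mu)$ is a measure space, $X$ is a Banach space, and $(x_i)_{i \in I}$ is a family in $L_r(\mu, X)$. If there is a constant $C_1$ and a density $f \in D(\mu)$ such that for every measurable set $E$ and every $i$, $\|1_E x_i\|_{L_r(\mu,X)} \le C_1 (\int_E f\,d\mu)^{1/r - 1/p}$, then there is a universal constant $c$ such that for every finite sequence of scalars $(\alpha_i)$, $\big\|\sup_i \{|\alpha_i|\, \|x_i(\cdot)\|_X\}\big\|_{L_r(\mu)} \le c\, C_1 \big(\sum_i |\alpha_i|^p\big)^{1/p}$. -/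

import Mathlib

open MeasureTheory
open scoped ENNReal

/-- One implication of the vector-valued Pisier factorization theorem:
if `‖1_E x_i‖_{L_r} ≤ C₁ (∫_E f dμ)^{1/r-1/p}` for a density `f` and all
measurable `E`, then there is a universal constant `c` with
`‖sup_i |α_i| ‖x_i(·)‖‖_{L_r} ≤ c C₁ (∑ |α_i|^p)^{1/p}` for all finite scalar
sequences `(α_i)`. -/
theorem pisier_factorization_implication :
    ∃ c : ℝ, 0 < c ∧
      ∀ (Ω : Type) (_ : MeasurableSpace Ω) (μ : Measure Ω)
        (X : Type) (_ : NormedAddCommGroup X)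
        (r p : ℝ) (hr : 0 < r) (hrp : r < p)
        (I : Type) (x : I → Ω → X)
        (hx : ∀ i, MemLp (x i) (ENNReal.ofReal r) μ)
        (C₁ : ℝ) (hC₁ : 0 ≤ C₁)
        (f : Ω → ℝ) (hf0 : 0 ≤ f) (hfint : Integrable f μ)
        (hfden : ∫ t, f t ∂μ = 1)
        (hdom : ∀ E : Set Ω, MeasurableSet E → ∀ i,
          eLpNorm (E.indicator (x i)) (ENNReal.ofReal r) μ ≤
            ENNReal.ofReal (C₁ * (∫ t in E, f t ∂μ) ^ (1 / r - 1 / p)))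
        (s : Finset I) (hs : s.Nonempty) (α : I → ℝ),
        eLpNorm (fun ω => s.sup' hs fun i => |α i| * ‖x i ω‖)
            (ENNReal.ofReal r) μ ≤
          ENNReal.ofReal (c * C₁ * (∑ i ∈ s, |α i| ^ p) ^ (1 / p)) := by
  refine ⟨1, one_pos, ?_⟩
  intro Ω mΩ μ X nX r p hr hrp I x hx C₁ hC₁ f hf0 hfint hfden hdom s hs α
  classical
  have hp : 0 < p := hr.trans hrp
  have hpr : 0 < p - r := by linarith
  set S : ℝ := ∑ i ∈ s, |α i| ^ p with hSdef
  have hS0 : 0 ≤ S := Finset.sum_nonneg fun i _ => Real.rpow_nonneg (abs_nonneg _) _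
  have hrne : ENNReal.ofReal r ≠ 0 := by
    simp [ENNReal.ofReal_eq_zero, not_le, hr]
  have hrtop : ENNReal.ofReal r ≠ ∞ := ENNReal.ofReal_ne_top
  -- measurable versions of the `x i`
  have hxm : ∀ i, AEStronglyMeasurable (x i) μ := fun i => (hx i).aestronglyMeasurable
  set y : I → Ω → X := fun i => (hxm i).mk (x i) with hydef
  have hym : ∀ i, StronglyMeasurable (y i) := fun i => (hxm i).stronglyMeasurable_mk
  have hyx : ∀ i, x i =ᵐ[μ] y i := fun i => (hxm i).ae_eq_mk
  set h : I → Ω → ℝ := fun i ω => |α i| * ‖y i ω‖ with hhdef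
  have hhm : ∀ i, Measurable (h i) := fun i =>
    measurable_const.mul (hym i).norm.measurable
  have hh0 : ∀ i ω, 0 ≤ h i ω := fun i ω => mul_nonneg (abs_nonneg _) (norm_nonneg _)
  set g : Ω → ℝ := fun ω => s.sup' hs fun i => h i ω with hgdef
  have hgm : Measurable g := by
    have h1 : Measurable (s.sup' hs h) := Finset.measurable_sup' hs fun i _ => hhm i
    have h2 : g = s.sup' hs h := funext fun ω => (Finset.sup'_apply hs h ω).symm
    rwa [h2]
  have hgsm : StronglyMeasurable g := hgm.stronglyMeasurable
  have hg0 : ∀ ω, 0 ≤ g ω :=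
    fun ω => le_trans (hh0 hs.choose ω) (Finset.le_sup' (fun i => h i ω) hs.choose_spec)
  -- a.e. equality with the original sup
  have hgg : (fun ω => s.sup' hs fun i => |α i| * ‖x i ω‖) =ᵐ[μ] g := by
    have hae : ∀ᵐ ω ∂μ, ∀ i ∈ (s : Set I), x i ω = y i ω :=
      (ae_ball_iff s.countable_toSet).2 fun i _ => hyx i
    filter_upwards [hae] with ω hω
    exact Finset.sup'_congr hs rfl fun i hi => by rw [hω i hi]
  -- tie-breaking index
  set e : I → ℕ := fun i => s.toList.idxOf i with hedef
  have he_inj : ∀ i ∈ s, ∀ j ∈ s, e i = e j → i = j := by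
    intro i hi j hj hij
    have hi' : i ∈ s.toList := Finset.mem_toList.2 hi
    have hj' : j ∈ s.toList := Finset.mem_toList.2 hj
    exact (List.idxOf_inj hi').1 hij
  -- the partition
  set A : I → Set Ω :=
    fun i => {ω | h i ω = g ω ∧ ∀ j ∈ s, e j < e i → h j ω ≠ g ω} with hAdef
  have hAm : ∀ i, MeasurableSet (A i) := by
    intro i
    have h1 : ∀ j, MeasurableSet {ω | h j ω = g ω} := fun j =>
      measurableSet_eq_fun (hhm j) hgm
    have h2 : A i = {ω | h i ω = g ω} ∩
        ⋂ j ∈ s.filter (fun j => e j < e i), {ω | h j ω = g ω}ᶜ := by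
      ext ω
      simp only [hAdef, Set.mem_setOf_eq, Set.mem_inter_iff, Set.mem_iInter,
        Set.mem_compl_iff, Finset.mem_filter, and_imp]
    rw [h2]
    exact (h1 i).inter
      (MeasurableSet.biInter (s.filter _).countable_toSet fun j _ => (h1 j).compl)
  have hcover : ∀ ω, ∃ i ∈ s, ω ∈ A i := by
    intro ω
    obtain ⟨i₀, hi₀, hgi₀⟩ := Finset.exists_mem_eq_sup' hs fun i => h i ω
    set T := s.filter fun j => h j ω = g ω with hT
    have hTne : T.Nonempty := ⟨i₀, Finset.mem_filter.2 ⟨hi₀, hgi₀.symm⟩⟩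
    obtain ⟨i, hiT, hmin⟩ := T.exists_min_image e hTne
    refine ⟨i, (Finset.mem_filter.1 hiT).1, (Finset.mem_filter.1 hiT).2, ?_⟩
    intro j hj hlt heq
    exact absurd (hmin j (Finset.mem_filter.2 ⟨hj, heq⟩)) (not_le.2 hlt)
  have hdisj : (↑s : Set I).PairwiseDisjoint A := by
    intro i hi j hj hij
    have hee : e i ≠ e j := fun hc => hij (he_inj i hi j hj hc)
    rw [Function.onFun, Set.disjoint_left]
    intro ω hωi hωj
    rcases hee.lt_or_gt with hlt | hlt
    · exact hωj.2 i hi hlt hωi.1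
    · exact hωi.2 j hj hlt hωj.1
  have hUnion : ⋃ i ∈ s, A i = Set.univ := by
    ext ω
    simp only [Set.mem_iUnion, Set.mem_univ, iff_true]
    obtain ⟨i, hi, hωi⟩ := hcover ω
    exact ⟨i, hi, hωi⟩
  -- the densities of the pieces
  set ν : I → ℝ := fun i => ∫ ω in A i, f ω ∂μ with hνdef
  have hν0 : ∀ i, 0 ≤ ν i := fun i =>
    setIntegral_nonneg (hAm i) fun ω _ => hf0 ω
  have hνsum : ∑ i ∈ s, ν i = 1 := by
    have := (integral_biUnion_finset s (fun i _ => hAm i)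
      (fun i hi j hj hij => hdisj hi hj hij) (fun i _ => hfint.integrableOn)
      (f := f)).symm
    calc ∑ i ∈ s, ν i = ∫ ω in ⋃ i ∈ s, A i, f ω ∂μ := this
      _ = 1 := by rw [hUnion, setIntegral_univ, hfden]
  -- key estimate on each piece
  have hkey : ∀ i, ∫⁻ ω in A i, (‖y i ω‖₊ : ℝ≥0∞) ^ r ∂μ ≤
      ENNReal.ofReal (C₁ ^ r * ν i ^ (1 - r / p)) := by
    intro i
    have h1 := hdom (A i) (hAm i) i
    have h2 : eLpNorm ((A i).indicator (y i)) (ENNReal.ofReal r) μ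
        = eLpNorm ((A i).indicator (x i)) (ENNReal.ofReal r) μ :=
      eLpNorm_congr_ae ((hyx i).symm.indicator (s := A i))
    have h3 : eLpNorm ((A i).indicator (y i)) (ENNReal.ofReal r) μ
        = (∫⁻ ω in A i, (‖y i ω‖₊ : ℝ≥0∞) ^ r ∂μ) ^ (1 / r) := by
      rw [eLpNorm_indicator_eq_eLpNorm_restrict (hAm i),
        eLpNorm_eq_lintegral_rpow_enorm_toReal hrne hrtop, ENNReal.toReal_ofReal hr.le]
      rfl
    have h4 : ∫⁻ ω in A i, (‖y i ω‖₊ : ℝ≥0∞) ^ r ∂μ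
        = (eLpNorm ((A i).indicator (y i)) (ENNReal.ofReal r) μ) ^ r := by
      rw [h3, ← ENNReal.rpow_mul, one_div, inv_mul_cancel₀ hr.ne', ENNReal.rpow_one]
    rw [h4, h2]
    calc (eLpNorm ((A i).indicator (x i)) (ENNReal.ofReal r) μ) ^ r
        ≤ (ENNReal.ofReal (C₁ * ν i ^ (1 / r - 1 / p))) ^ r :=
          ENNReal.rpow_le_rpow h1 hr.le
      _ = ENNReal.ofReal ((C₁ * ν i ^ (1 / r - 1 / p)) ^ r) :=
          ENNReal.ofReal_rpow_of_nonneg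
            (mul_nonneg hC₁ (Real.rpow_nonneg (hν0 i) _)) hr.le
      _ = ENNReal.ofReal (C₁ ^ r * ν i ^ (1 - r / p)) := by
          rw [Real.mul_rpow hC₁ (Real.rpow_nonneg (hν0 i) _),
            ← Real.rpow_mul (hν0 i)]
          have hexp : (1 / r - 1 / p) * r = 1 - r / p := by
            field_simp
          rw [hexp]
  -- Hölder inequality
  have hconj : Real.HolderConjugate (p / r) (p / (p - r)) := by
    constructor
    · rw [inv_div, inv_div, inv_one, ← add_div, add_sub_cancel, div_self hp.ne']
    · positivity
    · exact div_pos hp hpr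
  have hHolder : ∑ i ∈ s, |α i| ^ r * ν i ^ (1 - r / p) ≤ S ^ (r / p) := by
    have hH := Real.inner_le_Lp_mul_Lq_of_nonneg (s := s)
      (f := fun i => |α i| ^ r) (g := fun i => ν i ^ (1 - r / p)) hconj
      (fun i _ => Real.rpow_nonneg (abs_nonneg _) _)
      (fun i _ => Real.rpow_nonneg (hν0 i) _)
    have e1 : ∀ i, (|α i| ^ r) ^ (p / r) = |α i| ^ p := by
      intro i
      rw [← Real.rpow_mul (abs_nonneg _)]
      congr 1
      field_simp
    have e2 : ∀ i, (ν i ^ (1 - r / p)) ^ (p / (p - r)) = ν i := by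
      intro i
      rw [← Real.rpow_mul (hν0 i)]
      have : (1 - r / p) * (p / (p - r)) = 1 := by
        field_simp
      rw [this, Real.rpow_one]
    have e3 : (1 : ℝ) / (p / r) = r / p := by
      rw [one_div, inv_div]
    calc ∑ i ∈ s, |α i| ^ r * ν i ^ (1 - r / p)
        ≤ (∑ i ∈ s, (|α i| ^ r) ^ (p / r)) ^ (1 / (p / r)) *
            (∑ i ∈ s, (ν i ^ (1 - r / p)) ^ (p / (p - r))) ^ (1 / (p / (p - r))) := hH
      _ = S ^ (r / p) := by
          simp_rw [e1, e2, e3, hνsum, ← hSdef, Real.one_rpow, mul_one]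
  -- main estimate on the lintegral
  have hmain : ∫⁻ ω, (‖g ω‖₊ : ℝ≥0∞) ^ r ∂μ ≤ ENNReal.ofReal (C₁ ^ r * S ^ (r / p)) := by
    have step1 : ∫⁻ ω, (‖g ω‖₊ : ℝ≥0∞) ^ r ∂μ
        = ∑ i ∈ s, ∫⁻ ω in A i, (‖g ω‖₊ : ℝ≥0∞) ^ r ∂μ := by
      rw [← lintegral_biUnion_finset (fun i hi j hj hij => hdisj hi hj hij)
        (fun i _ => hAm i), hUnion, Measure.restrict_univ]
    have step2 : ∀ i ∈ s, ∫⁻ ω in A i, (‖g ω‖₊ : ℝ≥0∞) ^ r ∂μ ≤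
        ENNReal.ofReal (|α i| ^ r * (C₁ ^ r * ν i ^ (1 - r / p))) := by
      intro i hi
      have hcongr : ∫⁻ ω in A i, (‖g ω‖₊ : ℝ≥0∞) ^ r ∂μ
          = ∫⁻ ω in A i,
              ENNReal.ofReal |α i| ^ r * (‖y i ω‖₊ : ℝ≥0∞) ^ r ∂μ := by
        refine setLIntegral_congr_fun (hAm i) (fun ω hω => ?_)
        have hωg : h i ω = g ω := hω.1
        rw [← hωg]
        have : (‖h i ω‖₊ : ℝ≥0∞) = ENNReal.ofReal |α i| * (‖y i ω‖₊ : ℝ≥0∞) := by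
          rw [hhdef]
          simp only [← enorm_eq_nnnorm, ← ofReal_norm, Real.norm_eq_abs, abs_mul,
            abs_abs, abs_norm]
          rw [ENNReal.ofReal_mul (abs_nonneg _)]
        rw [this, ENNReal.mul_rpow_of_nonneg _ _ hr.le]
      rw [hcongr, lintegral_const_mul' _ _ (by
        exact ENNReal.rpow_ne_top_of_nonneg hr.le ENNReal.ofReal_ne_top)]
      calc ENNReal.ofReal |α i| ^ r * ∫⁻ ω in A i, (‖y i ω‖₊ : ℝ≥0∞) ^ r ∂μ
          ≤ ENNReal.ofReal |α i| ^ r *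
              ENNReal.ofReal (C₁ ^ r * ν i ^ (1 - r / p)) :=
            mul_le_mul_right (hkey i) _
        _ = ENNReal.ofReal (|α i| ^ r * (C₁ ^ r * ν i ^ (1 - r / p))) := by
            rw [ENNReal.ofReal_rpow_of_nonneg (abs_nonneg _) hr.le,
              ← ENNReal.ofReal_mul (Real.rpow_nonneg (abs_nonneg _) _)]
    calc ∫⁻ ω, (‖g ω‖₊ : ℝ≥0∞) ^ r ∂μ
        = ∑ i ∈ s, ∫⁻ ω in A i, (‖g ω‖₊ : ℝ≥0∞) ^ r ∂μ := step1
      _ ≤ ∑ i ∈ s, ENNReal.ofReal (|α i| ^ r * (C₁ ^ r * ν i ^ (1 - r / p))) :=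
          Finset.sum_le_sum step2
      _ = ENNReal.ofReal (∑ i ∈ s, |α i| ^ r * (C₁ ^ r * ν i ^ (1 - r / p))) :=
          (ENNReal.ofReal_sum_of_nonneg fun i _ =>
            mul_nonneg (Real.rpow_nonneg (abs_nonneg _) _)
              (mul_nonneg (Real.rpow_nonneg hC₁ _) (Real.rpow_nonneg (hν0 i) _))).symm
      _ ≤ ENNReal.ofReal (C₁ ^ r * S ^ (r / p)) := by
          apply ENNReal.ofReal_le_ofReal
          have : ∑ i ∈ s, |α i| ^ r * (C₁ ^ r * ν i ^ (1 - r / p))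
              = C₁ ^ r * ∑ i ∈ s, |α i| ^ r * ν i ^ (1 - r / p) := by
            rw [Finset.mul_sum]
            exact Finset.sum_congr rfl fun i _ => by ring
          rw [this]
          exact mul_le_mul_of_nonneg_left hHolder (Real.rpow_nonneg hC₁ _)
  -- conclusion
  rw [eLpNorm_congr_ae hgg, eLpNorm_eq_lintegral_rpow_enorm_toReal hrne hrtop,
    ENNReal.toReal_ofReal hr.le]
  calc (∫⁻ ω, (‖g ω‖₊ : ℝ≥0∞) ^ r ∂μ) ^ (1 / r)
      ≤ (ENNReal.ofReal (C₁ ^ r * S ^ (r / p))) ^ (1 / r) :=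
        ENNReal.rpow_le_rpow hmain (by positivity)
    _ = ENNReal.ofReal ((C₁ ^ r * S ^ (r / p)) ^ (1 / r)) :=
        ENNReal.ofReal_rpow_of_nonneg
          (mul_nonneg (Real.rpow_nonneg hC₁ _) (Real.rpow_nonneg hS0 _))
          (by positivity)
    _ = ENNReal.ofReal (1 * C₁ * S ^ (1 / p)) := by
        congr 1
        rw [Real.mul_rpow (Real.rpow_nonneg hC₁ _) (Real.rpow_nonneg hS0 _),
          ← Real.rpow_mul hC₁, ← Real.rpow_mul hS0, mul_one_div, div_self hr.ne',
          Real.rpow_one, one_mul]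
        have hexp2 : r / p * (1 / r) = 1 / p := by
          field_simp
        rw [hexp2]
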